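/- Let M ∈ (0,1] and κ > −1. Then there exist C > 0 and R₀ > 1 such that for every s = R·e^{iθ} with R ≥ R₀ and θ ∈ [−π,π] one has |∫₀^M s^α (M−α)^κ dα − Γ(κ+1)·s^M/(log s)^{κ+1}| ≤ C/log R, where log s := log R + iθ, s^α := exp(α·log s), s^M := exp(M·log s), and (log s)^{κ+1} := exp((κ+1)·Log(log s)) with the principal logarithm Log (note Re(log s) = log R > 0, so this is well defined). -/

import Mathlib

open MeasureTheory Complex Set intervalIntegral

namespace Stmt3Aux

lemma int_aux {p c : ℝ} (hp : -1 < p) (hc : 0 < c) :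
    IntegrableOn (fun t : ℝ => t ^ p * Real.exp (-c * t)) (Ioi 0) := by
  simpa using integrableOn_rpow_mul_exp_neg_mul_rpow hp zero_lt_one hc

lemma norm_aux (κ : ℝ) (z : ℂ) {t : ℝ} (ht : 0 < t) :
    ‖((t ^ κ : ℝ) : ℂ) * Complex.exp (-(z * t))‖ = t ^ κ * Real.exp (-z.re * t) := by
  rw [norm_mul, Complex.norm_real, Real.norm_eq_abs, Complex.norm_exp,
    _root_.abs_of_nonneg (Real.rpow_nonneg ht.le _)]
  congr 1
  simp [Complex.mul_re]

lemma contOn (κ : ℝ) (z : ℂ) :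
    ContinuousOn (fun t : ℝ => ((t ^ κ : ℝ) : ℂ) * Complex.exp (-(z * t))) (Ioi 0) := by
  apply ContinuousOn.mul
  · exact Complex.continuous_ofReal.comp_continuousOn
      (continuousOn_id.rpow_const fun x hx => Or.inl (ne_of_gt hx))
  · exact (Complex.continuous_exp.comp
      ((continuous_const.mul Complex.continuous_ofReal).neg)).continuousOn

lemma integrable_g {κ : ℝ} (hκ : -1 < κ) {z : ℂ} (hz : 0 < z.re) :
    IntegrableOn (fun t : ℝ => ((t ^ κ : ℝ) : ℂ) * Complex.exp (-(z * t))) (Ioi 0) := by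
  apply Integrable.mono' (int_aux hκ hz)
  · exact (contOn κ z).aestronglyMeasurable measurableSet_Ioi
  · filter_upwards [ae_restrict_mem measurableSet_Ioi] with t ht
    exact le_of_eq (norm_aux κ z ht)

end Stmt3Aux

namespace Stmt3Aux

noncomputable def f (κ : ℝ) (z : ℂ) : ℂ :=
  ∫ t in Ioi (0:ℝ), ((t ^ κ : ℝ) : ℂ) * Complex.exp (-(z * t))

lemma f_diff {κ : ℝ} (hκ : -1 < κ) {z₀ : ℂ} (hz₀ : 0 < z₀.re) :
    DifferentiableAt ℂ (f κ) z₀ := by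
  set ε : ℝ := z₀.re / 2 with hε
  have hεpos : 0 < ε := by positivity
  have key := _root_.hasDerivAt_integral_of_dominated_loc_of_deriv_le (μ := volume.restrict (Ioi 0))
    (F := fun z t => ((t ^ κ : ℝ) : ℂ) * Complex.exp (-(z * t)))
    (F' := fun z t => ((t ^ κ : ℝ) : ℂ) * (-(t : ℂ) * Complex.exp (-(z * t))))
    (x₀ := z₀) (bound := fun t => t ^ (κ + 1) * Real.exp (-ε * t)) (Metric.ball_mem_nhds z₀ hεpos)
    ?_ ?_ ?_ ?_ ?_ ?_
  · exact key.2.differentiableAt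
  · filter_upwards with z using (contOn κ z).aestronglyMeasurable measurableSet_Ioi
  · exact integrable_g hκ hz₀
  · apply ContinuousOn.aestronglyMeasurable ?_ measurableSet_Ioi
    exact (Complex.continuous_ofReal.comp_continuousOn
      (continuousOn_id.rpow_const fun x hx => Or.inl (ne_of_gt hx))).mul
      (((continuous_ofReal.neg).mul (Complex.continuous_exp.comp
        ((continuous_const.mul Complex.continuous_ofReal).neg))).continuousOn)
  · filter_upwards [ae_restrict_mem measurableSet_Ioi] with t ht z hz
    have ht0 : (0:ℝ) < t := ht
    have e1 : ((t ^ κ : ℝ) : ℂ) * (-(t : ℂ) * Complex.exp (-(z * t)))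
        = -(((t ^ (κ + 1) : ℝ) : ℂ) * Complex.exp (-(z * t))) := by
      rw [Real.rpow_add_one (ne_of_gt ht0)]; push_cast; ring
    rw [e1, norm_neg, norm_aux _ _ ht0]
    have hre : ε ≤ z.re := by
      have h2 : |(z - z₀).re| ≤ ‖z - z₀‖ := Complex.abs_re_le_norm _
      have h3 : ‖z - z₀‖ < ε := by simpa [dist_eq_norm] using hz
      have := abs_lt.mp (lt_of_le_of_lt h2 h3)
      simp only [Complex.sub_re] at this
      have : z₀.re - ε < z.re := by linarith [this.1]
      rw [hε] at this ⊢; linarith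
    have : Real.exp (-z.re * t) ≤ Real.exp (-ε * t) := by
      apply Real.exp_le_exp.mpr; nlinarith
    have hnn : (0:ℝ) ≤ t ^ (κ + 1) := Real.rpow_nonneg ht0.le _
    nlinarith [Real.exp_pos (-z.re * t)]
  · exact (int_aux (by linarith) hεpos)
  · filter_upwards [ae_restrict_mem measurableSet_Ioi] with t ht z hz
    have : HasDerivAt (fun z : ℂ => Complex.exp (-(z * t))) (-(t:ℂ) * Complex.exp (-(z * t))) z := by
      have h1 : HasDerivAt (fun z : ℂ => -(z * (t:ℂ))) (-(t:ℂ)) z := by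
        exact (hasDerivAt_mul_const (t:ℂ)).neg
      simpa [mul_comm] using h1.cexp
    exact this.const_mul _

end Stmt3Aux

namespace Stmt3Aux

lemma f_real {κ : ℝ} (hκ : -1 < κ) {r : ℝ} (hr : 0 < r) :
    f κ (r : ℂ) = (Real.Gamma (κ + 1) : ℂ) / (r : ℂ) ^ ((κ : ℂ) + 1) := by
  have ha : (0:ℝ) < ((κ : ℂ) + 1).re := by simpa using by linarith
  have key := Complex.integral_cpow_mul_exp_neg_mul_Ioi (a := (κ : ℂ) + 1) ha hr
  have e1 : f κ (r : ℂ) = ∫ t : ℝ in Ioi 0, (t : ℂ) ^ ((κ : ℂ) + 1 - 1) * Complex.exp (-(r * t)) := by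
    refine setIntegral_congr_fun measurableSet_Ioi fun t ht => ?_
    rw [add_sub_cancel_right, Complex.ofReal_cpow (le_of_lt ht)]
  rw [e1, key]
  have harg : (r : ℂ).arg ≠ Real.pi := by
    rw [Complex.arg_ofReal_of_nonneg hr.le]; exact Real.pi_ne_zero.symm
  rw [show ((1:ℂ)/r) = (r:ℂ)⁻¹ by rw [one_div], Complex.inv_cpow _ _ harg,
    show ((κ:ℂ)+1) = ((κ+1:ℝ):ℂ) by push_cast; ring, Complex.Gamma_ofReal,
    div_eq_mul_inv, mul_comm]

lemma keyA {κ : ℝ} (hκ : -1 < κ) {z : ℂ} (hz : 0 < z.re) :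
    f κ z = (Real.Gamma (κ + 1) : ℂ) / z ^ ((κ : ℂ) + 1) := by
  set U : Set ℂ := {w : ℂ | 0 < w.re} with hU
  have hUo : IsOpen U := isOpen_lt continuous_const Complex.continuous_re
  have hUc : IsPreconnected U := (convex_halfSpace_re_gt 0).isPreconnected
  set G : ℂ → ℂ := fun w => (Real.Gamma (κ + 1) : ℂ) / w ^ ((κ : ℂ) + 1) with hG
  have hfd : DifferentiableOn ℂ (f κ) U := fun w hw => (f_diff hκ hw).differentiableWithinAt
  have hf : AnalyticOnNhd ℂ (f κ) U := hfd.analyticOnNhd hUo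
  have hg : AnalyticOnNhd ℂ G U := by
    apply DifferentiableOn.analyticOnNhd ?_ hUo
    intro w hw
    apply DifferentiableAt.differentiableWithinAt
    apply DifferentiableAt.div (differentiableAt_const _)
    · exact differentiableAt_id.cpow (differentiableAt_const _) (Or.inl hw)
    · intro h
      rcases (Complex.cpow_eq_zero_iff _ _).mp h with ⟨h0, -⟩
      rw [h0] at hw; simp [hU] at hw
  have h1 : (1:ℂ) ∈ U := by simp [hU]
  have hfreq : ∃ᶠ w in nhdsWithin (1:ℂ) {(1:ℂ)}ᶜ, f κ w = G w := by
    have htend : Filter.Tendsto (fun n : ℕ => ((1 + ((n:ℝ) + 1)⁻¹ : ℝ) : ℂ)) Filter.atTop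
        (nhdsWithin (1:ℂ) {(1:ℂ)}ᶜ) := by
      apply tendsto_nhdsWithin_of_tendsto_nhds_of_eventually_within
      · have h5 : Filter.Tendsto (fun n : ℕ => (1 + ((n:ℝ) + 1)⁻¹ : ℝ)) Filter.atTop (nhds 1) := by
          simpa using tendsto_const_nhds.add (tendsto_one_div_add_atTop_nhds_zero_nat (𝕜 := ℝ))
        have h6 := (Complex.continuous_ofReal.tendsto 1).comp h5
        simpa [Function.comp_def] using h6
      · filter_upwards with n
        simp only [mem_compl_iff, mem_singleton_iff]
        intro h
        have h7 : (1 + ((n:ℝ) + 1)⁻¹ : ℝ) = 1 := by exact_mod_cast h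
        have h8 : ((n:ℝ) + 1)⁻¹ = 0 := by linarith
        rw [inv_eq_zero] at h8
        have : (0:ℝ) ≤ (n:ℝ) := Nat.cast_nonneg n
        linarith

    apply htend.frequently
    apply Filter.Eventually.frequently
    filter_upwards with n
    exact f_real hκ (by positivity)
  exact hf.eqOn_of_preconnected_of_frequently_eq hg hUc h1 hfreq hz

end Stmt3Aux

namespace Stmt3Aux

lemma rpow_le_const_mul_exp {M : ℝ} (κ : ℝ) (hM0 : 0 < M) :
    ∃ A : ℝ, 0 < A ∧ ∀ β : ℝ, M ≤ β → β ^ κ ≤ A * Real.exp β := by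
  set n : ℕ := ⌈max κ 0⌉₊ with hn
  refine ⟨max (M ^ κ) 1 + n.factorial, by positivity, fun β hβ => ?_⟩
  have hβ0 : 0 < β := lt_of_lt_of_le hM0 hβ
  have hexp1 : 1 ≤ Real.exp β := by
    rw [← Real.exp_zero]; exact Real.exp_le_exp.mpr hβ0.le
  have hmax0 : (0:ℝ) ≤ max (M ^ κ) 1 := le_trans zero_le_one (le_max_right _ _)
  have hfac : (0:ℝ) < n.factorial := by exact_mod_cast n.factorial_pos
  rcases le_or_gt β 1 with h1 | h1
  · have hb : β ^ κ ≤ max (M ^ κ) 1 := by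
      rcases le_or_gt 0 κ with hk | hk
      · exact le_max_of_le_right (Real.rpow_le_one hβ0.le h1 hk)
      · exact le_max_of_le_left (Real.rpow_le_rpow_of_nonpos hM0 hβ hk.le)
    nlinarith
  · have hb : β ^ κ ≤ β ^ (n:ℝ) :=
      Real.rpow_le_rpow_of_exponent_le h1.le ((le_max_left κ 0).trans (Nat.le_ceil _))
    rw [Real.rpow_natCast] at hb
    have hb3 : β ^ n ≤ n.factorial * Real.exp β := by
      have h4 := Real.pow_div_factorial_le_exp β hβ0.le n
      rw [div_le_iff₀ hfac] at h4
      linarith [h4]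
    nlinarith

end Stmt3Aux


open Stmt3Aux

theorem stmt_3 (M κ : ℝ) (hM0 : 0 < M) (hM1 : M ≤ 1) (hκ : -1 < κ) :
    ∃ C > 0, ∃ R₀ > 1, ∀ R ≥ R₀, ∀ θ ∈ Set.Icc (-Real.pi) Real.pi,
      ‖(∫ α in (0:ℝ)..M,
            Complex.exp ((α : ℂ) * ((Real.log R : ℂ) + (θ : ℂ) * Complex.I))
              * (((M - α) ^ κ : ℝ) : ℂ))
          - (Real.Gamma (κ + 1) : ℂ)
              * Complex.exp ((M : ℂ) * ((Real.log R : ℂ) + (θ : ℂ) * Complex.I))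
              / (((Real.log R : ℂ) + (θ : ℂ) * Complex.I) ^ ((κ : ℂ) + 1))‖
        ≤ C / Real.log R := by
  obtain ⟨A, hA, hAb⟩ := rpow_le_const_mul_exp (M := M) κ hM0
  have hR₀ : (1:ℝ) < Real.exp 2 := by
    rw [← Real.exp_zero]; exact Real.exp_lt_exp.mpr (by norm_num)
  refine ⟨2 * A * Real.exp M, by positivity, Real.exp 2, hR₀, fun R hR θ hθ => ?_⟩
  have hRpos : (0:ℝ) < R := lt_trans (by positivity) (lt_of_lt_of_le hR₀ hR)
  set x := Real.log R with hx
  have hx2 : 2 ≤ x := by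
    have := Real.log_le_log (Real.exp_pos 2) hR
    rwa [Real.log_exp] at this
  have hx0 : 0 < x := by linarith
  set L : ℂ := (x : ℂ) + (θ : ℂ) * Complex.I with hL
  have hLre : L.re = x := by simp [hL]
  have hLre' : 0 < L.re := by rw [hLre]; linarith
  set g : ℝ → ℂ := fun t => ((t ^ κ : ℝ) : ℂ) * Complex.exp (-(L * t)) with hg
  have gI : IntegrableOn g (Ioi 0) := integrable_g hκ hLre'
  have gIoc : IntegrableOn g (Ioc 0 M) := gI.mono_set Ioc_subset_Ioi_self
  have gIoi : IntegrableOn g (Ioi M) := gI.mono_set (Ioi_subset_Ioi hM0.le)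
  have hΓ : (∫ t in Ioi (0:ℝ), g t) = (Real.Gamma (κ + 1) : ℂ) / L ^ ((κ : ℂ) + 1) :=
    keyA hκ hLre'
  have hsplit : (∫ t in Ioi (0:ℝ), g t) = (∫ t in Ioc (0:ℝ) M, g t) + ∫ t in Ioi M, g t := by
    rw [← Set.Ioc_union_Ioi_eq_Ioi hM0.le,
      setIntegral_union (Set.Ioc_disjoint_Ioi le_rfl) measurableSet_Ioi gIoc gIoi]
  have e1 : (∫ α in (0:ℝ)..M, Complex.exp ((α : ℂ) * L) * (((M - α) ^ κ : ℝ) : ℂ))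
      = ∫ t in (0:ℝ)..M, Complex.exp (((M - t : ℝ) : ℂ) * L) * ((t ^ κ : ℝ) : ℂ) := by
    have h := intervalIntegral.integral_comp_sub_left (a := 0) (b := M)
      (fun t : ℝ => Complex.exp (((M - t : ℝ) : ℂ) * L) * ((t ^ κ : ℝ) : ℂ)) M
    simp only [sub_sub_cancel, sub_zero, sub_self] at h
    rw [← h]
  have e2 : (∫ t in (0:ℝ)..M, Complex.exp (((M - t : ℝ) : ℂ) * L) * ((t ^ κ : ℝ) : ℂ))
      = Complex.exp ((M : ℂ) * L) * ∫ t in (0:ℝ)..M, g t := by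
    rw [← intervalIntegral.integral_const_mul]
    apply intervalIntegral.integral_congr
    intro t _
    simp only [hg]
    have h5 : ((M - t : ℝ) : ℂ) * L = (M : ℂ) * L + (-(L * t)) := by push_cast; ring
    rw [h5, Complex.exp_add]; ring
  have e3 : (∫ t in (0:ℝ)..M, g t) = ∫ t in Ioc (0:ℝ) M, g t :=
    intervalIntegral.integral_of_le hM0.le
  have e4 : (∫ α in (0:ℝ)..M, Complex.exp ((α : ℂ) * L) * (((M - α) ^ κ : ℝ) : ℂ))
        - (Real.Gamma (κ + 1) : ℂ) * Complex.exp ((M : ℂ) * L) / L ^ ((κ : ℂ) + 1)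
      = -(Complex.exp ((M : ℂ) * L) * ∫ t in Ioi M, g t) := by
    rw [e1, e2, e3]
    have h6 : (∫ t in Ioc (0:ℝ) M, g t)
        = (Real.Gamma (κ + 1) : ℂ) / L ^ ((κ : ℂ) + 1) - ∫ t in Ioi M, g t := by
      rw [← hΓ, hsplit]; ring
    rw [h6]; ring
  rw [e4, norm_neg, norm_mul, Complex.norm_exp]
  have hMre : ((M : ℂ) * L).re = M * x := by rw [Complex.re_ofReal_mul, hLre]
  rw [hMre]
  -- bound the tail integral
  have hbint : IntegrableOn (fun t : ℝ => A * Real.exp (-(x - 1) * t)) (Ioi M) :=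
    (exp_neg_integrableOn_Ioi M (by linarith : (0:ℝ) < x - 1)).const_mul A
  have htail : ‖∫ t in Ioi M, g t‖ ≤ ∫ t in Ioi M, A * Real.exp (-(x - 1) * t) := by
    apply MeasureTheory.norm_integral_le_of_norm_le hbint
    filter_upwards [ae_restrict_mem measurableSet_Ioi] with t ht
    have ht0 : (0:ℝ) < t := lt_trans hM0 ht
    rw [hg, norm_aux κ L ht0, hLre]
    have h7 : t ^ κ ≤ A * Real.exp t := hAb t (le_of_lt ht)
    calc t ^ κ * Real.exp (-x * t) ≤ A * Real.exp t * Real.exp (-x * t) :=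
          mul_le_mul_of_nonneg_right h7 (Real.exp_nonneg _)
      _ = A * Real.exp (-(x - 1) * t) := by
          rw [mul_assoc, ← Real.exp_add]; ring_nf
  have hval : (∫ t in Ioi M, A * Real.exp (-(x - 1) * t))
      = A * ((x - 1)⁻¹ * Real.exp (-((x - 1) * M))) := by
    rw [MeasureTheory.integral_const_mul]
    congr 1
    have h8 := MeasureTheory.integral_comp_mul_left_Ioi (fun u => Real.exp (-u)) M
      (show (0:ℝ) < x - 1 by linarith)
    simp only [neg_mul, smul_eq_mul] at h8 ⊢
    rw [h8, integral_exp_neg_Ioi]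
  have hb2 : ‖∫ t in Ioi M, g t‖ ≤ A * ((x - 1)⁻¹ * Real.exp (-((x - 1) * M))) :=
    le_trans htail (le_of_eq hval)
  calc Real.exp (M * x) * ‖∫ t in Ioi M, g t‖
      ≤ Real.exp (M * x) * (A * ((x - 1)⁻¹ * Real.exp (-((x - 1) * M)))) := by
        exact mul_le_mul_of_nonneg_left hb2 (Real.exp_nonneg _)
    _ = A * Real.exp M * (x - 1)⁻¹ := by
        rw [show Real.exp (M * x) * (A * ((x - 1)⁻¹ * Real.exp (-((x - 1) * M))))
            = A * (Real.exp (M * x) * Real.exp (-((x - 1) * M))) * (x - 1)⁻¹ by ring,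
          ← Real.exp_add]
        ring_nf
    _ ≤ 2 * A * Real.exp M / x := by
        rw [div_eq_mul_inv]
        have h9 : (x - 1)⁻¹ ≤ 2 * x⁻¹ := by
          rw [inv_eq_one_div, inv_eq_one_div]
          rw [mul_one_div, div_le_div_iff₀ (by linarith) hx0]
          linarith
        calc A * Real.exp M * (x - 1)⁻¹ ≤ A * Real.exp M * (2 * x⁻¹) :=
              mul_le_mul_of_nonneg_left h9 (by positivity)
          _ = 2 * A * Real.exp M * x⁻¹ := by ring
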